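/- Let A be a closed symmetric relation in 𝔥 and let {𝓗,Γ} be an isometric boundary pair for A* whose domain T = dom Γ is dense in A* (in the norm of 𝔥×𝔥), with Weyl family M and γ-field γ, and assume that A₀ = ker Γ₀ is selfadjoint. Then: (i) T = A₀ +̂ N̂_λ(T), and N̂_λ(T) is dense in N̂_λ(A*), for every λ ∈ ℂ∖ℝ; (ii) for each fixed λ ∈ ℂ∖ℝ, Γ = (Γ ∩ (A₀ × (𝓗×𝓗))) +̂ {((γ(λ)h, λγ(λ)h),(h,h')) : (h,h') ∈ M(λ)}, a componentwise sum of relations from 𝔥×𝔥 to 𝓗×𝓗; (iii) if Γ̃ is an isometric boundary pair for A* (same 𝔥 and 𝓗) with Γ ⊆ Γ̃ and dom Γ̃ ⊆ A*, and M̃ is its Weyl family, then for each fixed λ ∈ ℂ∖ℝ one has Γ̃ = Γ if and only if M̃(λ) = M(λ). -/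

import Mathlib

noncomputable section

open Filter Topology

namespace BT

local notation "⟪" x ", " y "⟫" => @inner ℂ _ _ x y

section Ops
variable {α β γ' : Type*}

def domR (T : Set (α × β)) : Set α := {x | ∃ y, (x, y) ∈ T}
def ranR (T : Set (α × β)) : Set β := {y | ∃ x, (x, y) ∈ T}
def kerR [Zero β] (T : Set (α × β)) : Set α := {x | (x, (0 : β)) ∈ T}
def mulR [Zero α] (T : Set (α × β)) : Set β := {y | ((0 : α), y) ∈ T}
def invR (T : Set (α × β)) : Set (β × α) := {p | (p.2, p.1) ∈ T}
def compR (T₂ : Set (β × γ')) (T₁ : Set (α × β)) : Set (α × γ') :=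
  {p | ∃ y, (p.1, y) ∈ T₁ ∧ (y, p.2) ∈ T₂}
def csum [Add α] [Add β] (T₁ T₂ : Set (α × β)) : Set (α × β) :=
  {p | ∃ q ∈ T₁, ∃ r ∈ T₂, p = (q.1 + r.1, q.2 + r.2)}

def IsLinRel {M : Type*} [AddCommGroup M] [Module ℂ M] (s : Set M) : Prop :=
  ∃ p : Submodule ℂ M, (p : Set M) = s

def IsBddRel [Norm α] [Norm β] (T : Set (α × β)) : Prop :=
  ∃ C : ℝ, ∀ p ∈ T, ‖p.2‖ ≤ C * ‖p.1‖

def BddInv [NormedAddCommGroup α] (T : Set (α × α)) : Prop :=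
  (∀ v, ∃ p ∈ T, p.2 = v) ∧ (∀ p ∈ T, ∀ q ∈ T, p.2 = q.2 → p.1 = q.1) ∧
    ∃ C : ℝ, ∀ p ∈ T, ‖p.1‖ ≤ C * ‖p.2‖
end Ops

section Shifts
variable {α : Type*} [AddCommGroup α] [Module ℂ α]

def shiftSub (T : Set (α × α)) (l : ℂ) : Set (α × α) :=
  {p | ∃ q ∈ T, p = (q.1, q.2 - l • q.1)}
def shiftAdd (T : Set (α × α)) (l : ℂ) : Set (α × α) :=
  {p | ∃ q ∈ T, p = (q.1, q.2 + l • q.1)}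
def hatN (T : Set (α × α)) (l : ℂ) : Set (α × α) := {p ∈ T | p.2 = l • p.1}
def Nlam (T : Set (α × α)) (l : ℂ) : Set α := {f | (f, l • f) ∈ T}
def Hrel (A0s : Set (α × α)) (l : ℂ) : Set (α × (α × α)) :=
  {q | q.2 ∈ A0s ∧ q.2.2 - l • q.2.1 = q.1}
end Shifts

section InnerDefs
variable {E F : Type*} [NormedAddCommGroup E] [InnerProductSpace ℂ E]
  [NormedAddCommGroup F] [InnerProductSpace ℂ F]

def adjR (S : Set (F × E)) : Set (E × F) :=
  {p | ∀ q ∈ S, ⟪p.1, q.2⟫ = ⟪p.2, q.1⟫}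

def IsClosedSymRel (A : Set (E × E)) : Prop :=
  IsLinRel A ∧ IsClosed A ∧ A ⊆ adjR A

def kIP (p q : E × E) : ℂ := -Complex.I * ⟪q.1, p.2⟫ + Complex.I * ⟪q.2, p.1⟫

def kreinOrth (S : Set (E × E)) : Set (E × E) := {v | ∀ u ∈ S, kIP u v = 0}

def GreenPair (Γ : Set ((E × E) × (F × F))) : Prop :=
  ∀ p ∈ Γ, ∀ q ∈ Γ,
    ⟪q.1.1, p.1.2⟫ - ⟪q.1.2, p.1.1⟫ = ⟪q.2.1, p.2.2⟫ - ⟪q.2.2, p.2.1⟫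

def G0 (Γ : Set ((E × E) × (F × F))) : Set ((E × E) × F) := {p | ∃ h', (p.1, (p.2, h')) ∈ Γ}
def G1 (Γ : Set ((E × E) × (F × F))) : Set ((E × E) × F) := {p | ∃ h, (p.1, (h, p.2)) ∈ Γ}
def A0 (Γ : Set ((E × E) × (F × F))) : Set (E × E) := kerR (G0 Γ)
def A1 (Γ : Set ((E × E) × (F × F))) : Set (E × E) := kerR (G1 Γ)
def weyl (Γ : Set ((E × E) × (F × F))) (l : ℂ) : Set (F × F) :=
  {p | ∃ f : E, ((f, l • f), p) ∈ Γ}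
def gfield (Γ : Set ((E × E) × (F × F))) (l : ℂ) : Set (F × E) :=
  {p | ∃ h', ((p.2, l • p.2), (p.1, h')) ∈ Γ}

def kreinAdj (Γ : Set ((E × E) × (F × F))) : Set ((F × F) × (E × E)) :=
  {q | ∀ p ∈ Γ, kIP p.1 q.2 = kIP p.2 q.1}

def IsIsomPair (A : Set (E × E)) (Γ : Set ((E × E) × (F × F))) : Prop :=
  IsLinRel Γ ∧ domR Γ ⊆ adjR A ∧ GreenPair Γ
def IsDomDense (A : Set (E × E)) (Γ : Set ((E × E) × (F × F))) : Prop :=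
  closure (domR Γ) = adjR A
def IsABPair (A : Set (E × E)) (Γ : Set ((E × E) × (F × F))) : Prop :=
  IsIsomPair A Γ ∧ IsDomDense A Γ ∧ Dense (ranR (G0 Γ)) ∧ A0 Γ = adjR (A0 Γ)
def IsBPair (A : Set (E × E)) (Γ : Set ((E × E) × (F × F))) : Prop :=
  IsABPair A Γ ∧ ranR (G0 Γ) = Set.univ
def IsUnitaryPair (A : Set (E × E)) (Γ : Set ((E × E) × (F × F))) : Prop :=
  GreenPair Γ ∧ domR Γ ⊆ adjR A ∧ IsDomDense A Γ ∧ invR Γ = kreinAdj Γ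
def IsUnitaryBT (A : Set (E × E)) (Γ : Set ((E × E) × (F × F))) : Prop :=
  IsUnitaryPair A Γ ∧ mulR Γ = {0}
def IsOrdinaryBT (A : Set (E × E)) (Γ : Set ((E × E) × (F × F))) : Prop :=
  IsIsomPair A Γ ∧ mulR Γ = {0} ∧ domR Γ = adjR A ∧ ranR Γ = Set.univ

def Erel (Γ : Set ((E × E) × (F × F))) (m : ℂ) : Set (F × F) :=
  {p | ∃ u' v', (p.1, u') ∈ weyl Γ m ∧ (p.1, v') ∈ weyl Γ ((starRingEnd ℂ) m) ∧
        p.2 = (2 : ℂ)⁻¹ • (u' + v')}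

def triTransform (Γ : Set ((E × E) × (F × F))) (e : Set (F × F)) :
    Set ((E × E) × (F × F)) :=
  {q | ∃ h h' w, (q.1, (h, h')) ∈ Γ ∧ (h, w) ∈ e ∧ q.2 = (h, w + h')}

def formVal (l : ℂ) (u u' : F) : ℝ :=
  ((l - (starRingEnd ℂ) l)⁻¹ * (⟪u, u'⟫ - ⟪u', u⟫)).re

def FormClosable (l : ℂ) (Ms : Set (F × F)) : Prop :=
  ∀ u u' : ℕ → F, (∀ n, (u n, u' n) ∈ Ms) →
    Tendsto u atTop (nhds (0 : F)) →
    Tendsto (fun nm : ℕ × ℕ => formVal l (u nm.1 - u nm.2) (u' nm.1 - u' nm.2)) atTop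
      (nhds (0 : ℝ)) →
    Tendsto (fun n => formVal l (u n) (u' n)) atTop (nhds (0 : ℝ))

def formClosureDom (l : ℂ) (Ms : Set (F × F)) : Set F :=
  {v | ∃ u u' : ℕ → F, (∀ n, (u n, u' n) ∈ Ms) ∧ Tendsto u atTop (nhds v) ∧
    Tendsto (fun nm : ℕ × ℕ => formVal l (u nm.1 - u nm.2) (u' nm.1 - u' nm.2)) atTop
      (nhds (0 : ℝ))}

end InnerDefs

section CompleteDefs
variable {F : Type*} [NormedAddCommGroup F] [InnerProductSpace ℂ F] [CompleteSpace F]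

def IsNevFun (M₀ : ℂ → F →L[ℂ] F) : Prop :=
  DifferentiableOn ℂ M₀ {l : ℂ | l.im ≠ 0} ∧
  (∀ l : ℂ, l.im ≠ 0 → M₀ ((starRingEnd ℂ) l) = ContinuousLinearMap.adjoint (M₀ l)) ∧
  (∀ l : ℂ, 0 < l.im → ∀ u, 0 ≤ (⟪u, M₀ l u⟫).im)

def ImOp (Tb : F →L[ℂ] F) : F →L[ℂ] F :=
  ((2 : ℂ) * Complex.I)⁻¹ • (Tb - ContinuousLinearMap.adjoint Tb)

end CompleteDefs


section MyAux
variable {E : Type*} [NormedAddCommGroup E] [InnerProductSpace ℂ E]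

lemma sub_shift {G : Type*} [AddCommGroup G] [Module ℂ G] {l : ℂ} {a b c d : G}
    (h : d - l • c = b - l • a) : b - d = l • (a - c) := by
  have h2 : (b - d) - (l • a - l • c) = -(d - l • c - (b - l • a)) := by abel
  rw [smul_sub, ← sub_eq_zero, h2, sub_eq_zero.mpr h, neg_zero]

lemma adjR_isClosed (S : Set (E × E)) : IsClosed (adjR S) := by
  have h : adjR S = ⋂ q ∈ S, {p : E × E | ⟪p.1, q.2⟫ = ⟪p.2, q.1⟫} := by
    ext p; simp [adjR, Set.mem_iInter]
  rw [h]
  refine isClosed_biInter fun q _ => isClosed_eq ?_ ?_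
  · exact continuous_fst.inner continuous_const
  · exact continuous_snd.inner continuous_const

def adjS (S : Set (E × E)) : Submodule ℂ (E × E) where
  carrier := adjR S
  zero_mem' := fun q _ => by simp
  add_mem' := fun {a b} ha hb q hq => by
    simp only [Prod.fst_add, Prod.snd_add, inner_add_left, ha q hq, hb q hq]
  smul_mem' := fun c a ha q hq => by
    simp only [Prod.smul_fst, Prod.smul_snd, inner_smul_left, ha q hq]

lemma symm_bound {H : Set (E × E)} (hH : H ⊆ adjR H) {l : ℂ} {p : E × E} (hp : p ∈ H) :
    |l.im| * ‖p.1‖ ≤ ‖p.2 - l • p.1‖ := by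
  have hreal : ⟪p.1, p.2⟫ = ⟪p.2, p.1⟫ := hH hp p hp
  have him : (⟪p.1, p.2⟫ : ℂ).im = 0 := by
    have hc : (starRingEnd ℂ) ⟪p.2, p.1⟫ = ⟪p.1, p.2⟫ := inner_conj_symm _ _
    rw [← hreal] at hc
    exact Complex.conj_eq_iff_im.mp hc
  have hz : (⟪p.1, p.2 - l • p.1⟫ : ℂ) = ⟪p.1, p.2⟫ - l * ((‖p.1‖ : ℂ) ^ 2) := by
    simp [inner_sub_right, inner_smul_right, inner_self_eq_norm_sq_to_K]
  have him2 : (⟪p.1, p.2 - l • p.1⟫ : ℂ).im = -(l.im * ‖p.1‖ ^ 2) := by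
    rw [hz]
    simp [Complex.sub_im, Complex.mul_im, him, ← Complex.ofReal_pow]
  have h1 : |l.im| * ‖p.1‖ ^ 2 ≤ ‖p.1‖ * ‖p.2 - l • p.1‖ := by
    calc |l.im| * ‖p.1‖ ^ 2 = |(⟪p.1, p.2 - l • p.1⟫ : ℂ).im| := by
          rw [him2, abs_neg, abs_mul, abs_of_nonneg (by positivity : (0:ℝ) ≤ ‖p.1‖ ^ 2)]
      _ ≤ ‖(⟪p.1, p.2 - l • p.1⟫ : ℂ)‖ := by
          exact Complex.abs_im_le_norm _
      _ ≤ ‖p.1‖ * ‖p.2 - l • p.1‖ := norm_inner_le_norm _ _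
  rcases eq_or_lt_of_le (norm_nonneg p.1) with h0 | h0
  · rw [← h0, mul_zero]; exact norm_nonneg _
  · nlinarith [h1]

lemma eigen_zero {H : Set (E × E)} (hH : H ⊆ adjR H) {l : ℂ} (hl : l.im ≠ 0) {w : E}
    (hw : (w, l • w) ∈ H) : w = 0 := by
  have h := symm_bound hH (l := l) hw
  simp only [sub_self, norm_zero] at h
  have : ‖w‖ ≤ 0 := by
    by_contra hc
    push_neg at hc
    nlinarith [abs_pos.mpr hl]
  exact norm_le_zero_iff.mp this

lemma sa_surj [CompleteSpace E] {H : Set (E × E)} (hH : H = adjR H) {l : ℂ} (hl : l.im ≠ 0)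
    (v : E) : ∃ p ∈ H, p.2 - l • p.1 = v := by
  have hsub : H ⊆ adjR H := hH.le
  have hcoe : ((adjS H : Submodule ℂ (E × E)) : Set (E × E)) = H := hH.symm
  have hto : ∀ p : E × E, p ∈ H → p ∈ adjS H := fun p hp => by
    rw [← SetLike.mem_coe, hcoe]; exact hp
  have hfrom : ∀ p : E × E, p ∈ adjS H → p ∈ H := fun p hp => by
    rw [← hcoe]; exact hp
  have hclosed : IsClosed H := hH ▸ adjR_isClosed H
  set R : Submodule ℂ E :=
    (adjS H).map ((LinearMap.snd ℂ E E) - l • (LinearMap.fst ℂ E E)) with hR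
  have hmemR : ∀ u : E, u ∈ R ↔ ∃ p ∈ H, p.2 - l • p.1 = u := by
    intro u
    rw [hR, Submodule.mem_map]
    constructor
    · rintro ⟨p, hp, rfl⟩
      exact ⟨p, hfrom p hp, by simp⟩
    · rintro ⟨p, hp, he⟩
      exact ⟨p, hto p hp, by simpa using he⟩
  have hpos : (0:ℝ) < |l.im| := abs_pos.mpr hl
  have hRclosed : IsClosed (R : Set E) := by
    rw [← isSeqClosed_iff_isClosed]
    intro u w hu huv
    choose p hpH hpe using fun n => (hmemR (u n)).mp (hu n)
    have hkey : ∀ m n : ℕ, dist ((p m).1) ((p n).1) ≤ |l.im|⁻¹ * dist (u m) (u n) := by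
      intro m n
      have hd : p m - p n ∈ H := by
        exact hfrom _ (Submodule.sub_mem _ (hto _ (hpH m)) (hto _ (hpH n)))
      have hb := symm_bound hsub (l := l) hd
      have he : (p m - p n).2 - l • (p m - p n).1 = u m - u n := by
        simp only [Prod.snd_sub, Prod.fst_sub, smul_sub]
        rw [← hpe m, ← hpe n]; abel
      rw [he] at hb
      rw [dist_eq_norm, dist_eq_norm]
      rw [le_inv_mul_iff₀ hpos]
      simpa using hb
    have hcs : CauchySeq fun n => (p n).1 := by
      rw [Metric.cauchySeq_iff]
      intro ε hε
      obtain ⟨N, hN⟩ := (Metric.cauchySeq_iff.mp huv.cauchySeq) (ε * |l.im|) (by positivity)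
      refine ⟨N, fun m hm n hn => ?_⟩
      calc dist ((p m).1) ((p n).1) ≤ |l.im|⁻¹ * dist (u m) (u n) := hkey m n
        _ < |l.im|⁻¹ * (ε * |l.im|) := by
            apply mul_lt_mul_of_pos_left (hN m hm n hn) (by positivity)
        _ = ε := by field_simp
    obtain ⟨g, hg⟩ := cauchySeq_tendsto_of_complete hcs
    have hg2 : Tendsto (fun n => (p n).2) atTop (nhds (w + l • g)) := by
      have hh : ∀ n, (p n).2 = u n + l • (p n).1 := by
        intro n; rw [← hpe n]; abel
      simp only [hh]
      exact huv.add (hg.const_smul l)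
    have hmem : (g, w + l • g) ∈ H :=
      hclosed.mem_of_tendsto (hg.prodMk_nhds hg2) (Eventually.of_forall fun n => by
        simpa using hpH n)
    rw [SetLike.mem_coe, hmemR]
    exact ⟨(g, w + l • g), hmem, by simp⟩
  have hOrth : Rᗮ = ⊥ := by
    rw [Submodule.eq_bot_iff]
    intro w hw
    rw [Submodule.mem_orthogonal] at hw
    have hmemadj : (w, (starRingEnd ℂ) l • w) ∈ adjR H := by
      intro q hq
      have h0 : (⟪q.2 - l • q.1, w⟫ : ℂ) = 0 := hw _ ((hmemR _).mpr ⟨q, hq, rfl⟩)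
      rw [inner_sub_left, inner_smul_left, sub_eq_zero] at h0
      have h1 : (⟪w, q.2⟫ : ℂ) = l * ⟪w, q.1⟫ := by
        have h2 := congrArg (starRingEnd ℂ) h0
        simpa only [map_mul, inner_conj_symm, Complex.conj_conj] using h2
      rw [h1, inner_smul_left]
      simp
    have : w = 0 := by
      refine eigen_zero hsub (l := (starRingEnd ℂ) l) ?_ (by rwa [hH])
      simpa using hl
    exact this
  have hdense2 : (R.topologicalClosure : Set E) = Set.univ := by
    have h2 := Submodule.orthogonal_orthogonal_eq_closure R
    rw [hOrth, Submodule.bot_orthogonal_eq_top] at h2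
    rw [← h2]; rfl
  have huniv : (R : Set E) = Set.univ := by
    rw [← hRclosed.closure_eq, ← Submodule.topologicalClosure_coe, hdense2]
  exact (hmemR v).mp (by rw [← SetLike.mem_coe, huniv]; trivial)

end MyAux

section MyAux2
variable {E F : Type*} [NormedAddCommGroup E] [InnerProductSpace ℂ E]
  [NormedAddCommGroup F] [InnerProductSpace ℂ F]

lemma green_self {Γ' : Set ((E × E) × (F × F))} (hg : GreenPair Γ') {l : ℂ} (hl : l.im ≠ 0)
    {w : E} (hw : ((w, l • w), ((0, 0) : F × F)) ∈ Γ') : w = 0 := by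
  have h := hg _ hw _ hw
  simp only [inner_smul_right, inner_smul_left, inner_zero_left, sub_zero, sub_self,
    inner_self_eq_norm_sq_to_K] at h
  have h2 : (l - (starRingEnd ℂ) l) * ((‖w‖ : ℂ)) ^ 2 = 0 := by rw [sub_mul]; exact h
  rcases mul_eq_zero.mp h2 with h3 | h3
  · exfalso
    apply hl
    have h4 := congrArg Complex.im h3
    simp at h4
    linarith
  · have : (‖w‖ : ℂ) = 0 := pow_eq_zero_iff (by norm_num) |>.mp h3
    have : ‖w‖ = 0 := by exact_mod_cast this
    exact norm_eq_zero.mp this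

end MyAux2

variable {E F : Type*} [NormedAddCommGroup E] [InnerProductSpace ℂ E] [CompleteSpace E]
  [NormedAddCommGroup F] [InnerProductSpace ℂ F] [CompleteSpace F]

/-- decompositions of `dom Γ` and of the graph of `Γ` for an isometric
boundary pair with dense domain and selfadjoint `A₀`, and determination of `Γ` by its
Weyl family at one point. -/
theorem statement3 (A : Set (E × E)) (Γ : Set ((E × E) × (F × F)))
    (hA : IsClosedSymRel A) (hΓ : IsIsomPair A Γ) (hdense : IsDomDense A Γ)
    (hA0 : A0 Γ = adjR (A0 Γ)) :
    -- (i)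
    (∀ l : ℂ, l.im ≠ 0 →
       domR Γ = csum (A0 Γ) (hatN (domR Γ) l) ∧
       closure (hatN (domR Γ) l) = hatN (adjR A) l) ∧
    -- (ii)
    (∀ l : ℂ, l.im ≠ 0 →
       Γ = csum {p ∈ Γ | p.1 ∈ A0 Γ}
             {p : (E × E) × (F × F) |
               p.2 ∈ weyl Γ l ∧ (p.2.1, p.1.1) ∈ gfield Γ l ∧ p.1.2 = l • p.1.1}) ∧
    -- (iii)
    (∀ Γ' : Set ((E × E) × (F × F)), IsLinRel Γ' → GreenPair Γ' → domR Γ' ⊆ adjR A →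
       Γ ⊆ Γ' → ∀ l : ℂ, l.im ≠ 0 → (Γ' = Γ ↔ weyl Γ' l = weyl Γ l)) := by
  obtain ⟨⟨ΓS, hΓS⟩, hdomsub, hgreen⟩ := hΓ
  have hm : ∀ p : (E × E) × (F × F), p ∈ Γ ↔ p ∈ ΓS := fun p => by rw [← hΓS]; rfl
  have hA0sub : A0 Γ ⊆ adjR (A0 Γ) := hA0.le
  -- uniqueness of the gamma-field value
  have huniq : ∀ (l : ℂ), l.im ≠ 0 → ∀ (f g : E) (h h' k' : F),
      ((f, l • f), (h, h')) ∈ Γ → ((g, l • g), (h, k')) ∈ Γ → f = g := by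
    intro l hl f g h h' k' h1 h2
    have hd : (((f, l • f), (h, h')) : (E × E) × (F × F)) - ((g, l • g), (h, k')) ∈ Γ :=
      (hm _).mpr (sub_mem ((hm _).mp h1) ((hm _).mp h2))
    have he : (((f, l • f), (h, h')) : (E × E) × (F × F)) - ((g, l • g), (h, k'))
        = ((f - g, l • (f - g)), (0, h' - k')) := by
      simp [Prod.ext_iff, smul_sub]
    rw [he] at hd
    have hker : ((f - g, l • (f - g)) : E × E) ∈ A0 Γ := ⟨h' - k', hd⟩
    exact sub_eq_zero.mp (eigen_zero hA0sub (l := l) hl hker)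
  -- part (i)(a)
  have parti_a : ∀ l : ℂ, l.im ≠ 0 → domR Γ = csum (A0 Γ) (hatN (domR Γ) l) := by
    intro l hl
    apply Set.eq_of_subset_of_subset
    · rintro p ⟨b, hb⟩
      obtain ⟨q, hqA, he⟩ := sa_surj hA0 hl (p.2 - l • p.1)
      obtain ⟨k', hk'⟩ := hqA
      have hrΓ : (p, b) - ((q, ((0 : F), k')) : (E × E) × (F × F)) ∈ Γ :=
        (hm _).mpr (sub_mem ((hm _).mp hb) ((hm _).mp hk'))
      refine ⟨q, ⟨k', hk'⟩, p - q, ⟨⟨b - (0, k'), hrΓ⟩, ?_⟩, ?_⟩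
      · exact sub_shift he
      · simp [Prod.ext_iff]
    · rintro p ⟨q, hqA, r, ⟨⟨b, hbr⟩, -⟩, rfl⟩
      obtain ⟨k', hk'⟩ := hqA
      have : ((q, ((0 : F), k')) : (E × E) × (F × F)) + (r, b) ∈ Γ :=
        (hm _).mpr (add_mem ((hm _).mp hk') ((hm _).mp hbr))
      exact ⟨(0, k') + b, this⟩
  -- part (i)(b)
  have parti_b : ∀ l : ℂ, l.im ≠ 0 → closure (hatN (domR Γ) l) = hatN (adjR A) l := by
    intro l hl
    have hpos : (0:ℝ) < |l.im| := abs_pos.mpr hl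
    apply Set.eq_of_subset_of_subset
    · have hcl : IsClosed (hatN (adjR A) l) := by
        have hh : hatN (adjR A) l = adjR A ∩ {p : E × E | p.2 = l • p.1} := by
          ext p; exact Iff.rfl
        rw [hh]
        exact (adjR_isClosed A).inter
          (isClosed_eq continuous_snd (continuous_fst.const_smul l))
      refine closure_minimal ?_ hcl
      rintro p ⟨hpT, hpe⟩
      exact ⟨hdomsub hpT, hpe⟩
    · rintro p ⟨hpA, hpe⟩
      have hpcl : p ∈ closure (domR Γ) := by rw [hdense]; exact hpA
      obtain ⟨x, hxT, hxt⟩ := mem_closure_iff_seq_limit.mp hpcl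
      choose q hqA hqe using fun n => sa_surj hA0 hl ((x n).2 - l • (x n).1)
      -- boundary witnesses
      choose b hb using hxT
      choose k' hk' using hqA
      have hqA' : ∀ n, q n ∈ A0 Γ := fun n => ⟨k' n, hk' n⟩
      set r : ℕ → E × E := fun n => x n - q n with hrdef
      have hrT : ∀ n, r n ∈ hatN (domR Γ) l := by
        intro n
        refine ⟨⟨b n - (0, k' n), (hm _).mpr (sub_mem ((hm _).mp (hb n)) ((hm _).mp (hk' n)))⟩, ?_⟩
        exact sub_shift (hqe n)
      -- w n tends to zero
      have hwt : Tendsto (fun n => (x n).2 - l • (x n).1) atTop (nhds 0) := by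
        have hc : Continuous fun z : E × E => z.2 - l • z.1 :=
          continuous_snd.sub (continuous_fst.const_smul l)
        have := (hc.tendsto p).comp hxt
        simpa [hpe, Function.comp_def] using this
      have hq1 : Tendsto (fun n => (q n).1) atTop (nhds 0) := by
        rw [tendsto_zero_iff_norm_tendsto_zero]
        have hbound : ∀ n, ‖(q n).1‖ ≤ |l.im|⁻¹ * ‖(x n).2 - l • (x n).1‖ := by
          intro n
          have hbb := symm_bound hA0sub (l := l) (hqA' n)
          rw [hqe n] at hbb
          rw [le_inv_mul_iff₀ hpos]
          linarith [hbb]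
        have hlim : Tendsto (fun n => |l.im|⁻¹ * ‖(x n).2 - l • (x n).1‖) atTop (nhds 0) := by
          have := hwt.norm
          simpa using this.const_mul (|l.im|⁻¹)
        exact squeeze_zero (fun n => norm_nonneg _) hbound hlim
      have hq2 : Tendsto (fun n => (q n).2) atTop (nhds 0) := by
        have hh : ∀ n, (q n).2 = ((x n).2 - l • (x n).1) + l • (q n).1 := by
          intro n; rw [← hqe n]; abel
        simp only [hh]
        have := hwt.add (hq1.const_smul l)
        simpa using this
      have hqt : Tendsto q atTop (nhds (0 : E × E)) := by
        have := hq1.prodMk_nhds hq2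
        exact this
      have hrt : Tendsto r atTop (nhds p) := by
        have := hxt.sub hqt
        simpa using this
      exact mem_closure_iff_seq_limit.mpr ⟨r, hrT, hrt⟩
  refine ⟨fun l hl => ⟨parti_a l hl, parti_b l hl⟩, ?_, ?_⟩
  -- part (ii)
  · intro l hl
    apply Set.eq_of_subset_of_subset
    · intro p hp
      obtain ⟨q0, hq0A, he⟩ := sa_surj hA0 hl (p.1.2 - l • p.1.1)
      obtain ⟨k', hk'⟩ := hq0A
      have hqΓ : ((q0, ((0 : F), k')) : (E × E) × (F × F)) ∈ Γ := hk'
      have hrΓ : p - (q0, ((0 : F), k')) ∈ Γ :=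
        (hm _).mpr (sub_mem ((hm _).mp hp) ((hm _).mp hqΓ))
      set r : (E × E) × (F × F) := p - (q0, ((0 : F), k')) with hrdef
      have hr1 : r.1.2 = l • r.1.1 := sub_shift he
      have hreta : ((r.1.1, l • r.1.1), r.2) = r := by rw [← hr1]
      refine ⟨(q0, (0, k')), ⟨hqΓ, ⟨k', hk'⟩⟩, r, ⟨⟨r.1.1, ?_⟩, ⟨r.2.2, ?_⟩, hr1⟩, ?_⟩
      · rw [hreta]; exact hrΓ
      · have : ((r.1.1, l • r.1.1), (r.2.1, r.2.2)) = r := hreta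
        rw [this]; exact hrΓ
      · rw [hrdef]; simp [Prod.ext_iff]
    · rintro p ⟨q, ⟨hqΓ, -⟩, r, ⟨⟨u, hu⟩, ⟨k', hk'⟩, hre⟩, rfl⟩
      have hueq : u = r.1.1 := by
        refine huniq l hl u r.1.1 r.2.1 r.2.2 k' ?_ hk'
        exact hu
      have hrΓ : r ∈ Γ := by
        have he2 : ((u, l • u), r.2) = r := by rw [hueq, ← hre]
        rw [← he2]; exact hu
      have hsum : q + r ∈ Γ := (hm _).mpr (add_mem ((hm _).mp hqΓ) ((hm _).mp hrΓ))
      exact hsum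
  -- part (iii)
  · intro Γ' hlin' hgreen' hdom' hsub' l hl
    constructor
    · rintro rfl; rfl
    · intro hw
      obtain ⟨ΓS', hΓS'⟩ := hlin'
      have hm' : ∀ p : (E × E) × (F × F), p ∈ Γ' ↔ p ∈ ΓS' := fun p => by rw [← hΓS']; rfl
      apply Set.eq_of_subset_of_subset _ hsub'
      intro p hp
      obtain ⟨q0, hq0A, he⟩ := sa_surj hA0 hl (p.1.2 - l • p.1.1)
      obtain ⟨k', hk'⟩ := hq0A
      have hqΓ : ((q0, ((0 : F), k')) : (E × E) × (F × F)) ∈ Γ := hk'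
      have hrΓ' : p - (q0, ((0 : F), k')) ∈ Γ' :=
        (hm' _).mpr (sub_mem ((hm' _).mp hp) ((hm' _).mp (hsub' hqΓ)))
      set r : (E × E) × (F × F) := p - (q0, ((0 : F), k')) with hrdef
      have hr1 : r.1.2 = l • r.1.1 := sub_shift he
      have hreta : ((r.1.1, l • r.1.1), r.2) = r := by rw [← hr1]
      have hwmem : r.2 ∈ weyl Γ' l := ⟨r.1.1, by rw [hreta]; exact hrΓ'⟩
      rw [hw] at hwmem
      obtain ⟨u, hu⟩ := hwmem
      have hsΓ' : (((r.1.1 - u, l • (r.1.1 - u)) : E × E), ((0, 0) : F × F)) ∈ Γ' := by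
        have h1 : ((r.1.1, l • r.1.1), r.2) ∈ Γ' := by rw [hreta]; exact hrΓ'
        have h2 : ((u, l • u), r.2) ∈ Γ' := hsub' hu
        have h3 := (hm' _).mpr (sub_mem ((hm' _).mp h1) ((hm' _).mp h2))
        have he2 : ((((r.1.1, l • r.1.1), r.2)) : (E × E) × (F × F)) - ((u, l • u), r.2)
            = ((r.1.1 - u, l • (r.1.1 - u)), (0, 0)) := by
          simp [Prod.ext_iff, smul_sub]
        rwa [he2] at h3
      have hzero : r.1.1 - u = 0 := green_self hgreen' hl hsΓ'
      have hrΓ : r ∈ Γ := by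
        have hru : u = r.1.1 := (sub_eq_zero.mp hzero).symm
        have he3 : ((u, l • u), r.2) = r := by rw [hru, ← hr1]
        rw [← he3]; exact hu
      have hsum : ((q0, ((0 : F), k')) : (E × E) × (F × F)) + r ∈ Γ :=
        (hm _).mpr (add_mem ((hm _).mp hqΓ) ((hm _).mp hrΓ))
      have hpe : ((q0, ((0 : F), k')) : (E × E) × (F × F)) + r = p := by
        rw [hrdef]; abel
      rwa [hpe] at hsum

end BT
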